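/- The Minkowski sum of five copies of the 5-point set G₅ = {(R sin(2πk/5), R cos(2πk/5)) : k = 0,…,4}, with R = sqrt((5+√5)/10), consists of exactly 126 distinct points of ℝ². -/

import Mathlib

open Pointwise

/-- `R = √((5+√5)/10)`. -/
noncomputable def R : ℝ := Real.sqrt ((5 + Real.sqrt 5) / 10)

/-- The regular pentagon `G₅` as a subset of the plane. -/
noncomputable def G5 : Set (EuclideanSpace ℝ (Fin 2)) :=
  {p | ∃ k : ℕ, k < 5 ∧
    p = ![R * Real.sin (2 * Real.pi * k / 5), R * Real.cos (2 * Real.pi * k / 5)]}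

open Polynomial Complex

noncomputable def zeta : ℂ := Complex.exp (2 * Real.pi * I / 5)

lemma hzeta : IsPrimitiveRoot zeta 5 := Complex.isPrimitiveRoot_exp 5 (by norm_num)

lemma key (d : Fin 5 → ℤ) (h : ∑ k : Fin 5, (d k : ℂ) * zeta ^ (k : ℕ) = 0)
    (h2 : ∑ k : Fin 5, d k = 0) : d = 0 := by
  haveI : Fact (Nat.Prime 5) := ⟨by norm_num⟩
  set q : ℚ[X] := ∑ k : Fin 5, Polynomial.C ((d k : ℚ)) * X ^ (k : ℕ) with hq
  have hcoeff : ∀ k : Fin 5, q.coeff (k : ℕ) = (d k : ℚ) := by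
    intro k
    rw [hq, Polynomial.finset_sum_coeff]
    rw [Finset.sum_eq_single k]
    · simp
    · intro b _ hbk
      rw [Polynomial.coeff_C_mul, Polynomial.coeff_X_pow,
        if_neg (fun h => hbk (Fin.ext h.symm)), mul_zero]
    · simp
  have hqz : Polynomial.aeval zeta q = 0 := by
    rw [hq]; simpa using h
  have hmin : Polynomial.cyclotomic 5 ℚ = minpoly ℚ zeta :=
    Polynomial.cyclotomic_eq_minpoly_rat hzeta (by norm_num)
  have hdvd : Polynomial.cyclotomic 5 ℚ ∣ q := by
    rw [hmin]
    exact minpoly.dvd ℚ zeta hqz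
  obtain ⟨r, hr⟩ := hdvd
  have hdegq : q.natDegree ≤ 4 := by
    rw [hq]
    apply Polynomial.natDegree_sum_le_of_forall_le
    intro k _
    apply le_trans (Polynomial.natDegree_C_mul_le _ _)
    rw [Polynomial.natDegree_X_pow]
    omega
  have hdegc : (Polynomial.cyclotomic 5 ℚ).natDegree = 4 := by
    rw [Polynomial.natDegree_cyclotomic]; decide
  -- r is a constant
  have hrC : r = Polynomial.C (r.coeff 0) := by
    by_cases hq0 : q = 0
    · have : r = 0 ∨ r ≠ 0 := em _
      rcases this with h0 | h0
      · rw [h0]; simp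
      · exfalso
        have := hr
        rw [hq0] at this
        exact (Polynomial.cyclotomic_ne_zero 5 ℚ) (by
          rcases mul_eq_zero.mp this.symm with h | h
          · exact h
          · exact absurd h h0)
    · have hr0 : r ≠ 0 := by
        intro h0; rw [h0, mul_zero] at hr; exact hq0 hr
      have : q.natDegree = 4 + r.natDegree := by
        rw [hr, Polynomial.natDegree_mul (Polynomial.cyclotomic_ne_zero 5 ℚ) hr0, hdegc]
      have hrd : r.natDegree = 0 := by omega
      obtain ⟨c, hc⟩ := Polynomial.natDegree_eq_zero.mp hrd
      rw [← hc]; simp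
  have hall : ∀ k : Fin 5, (d k : ℚ) = r.coeff 0 := by
    intro k
    have := hcoeff k
    rw [hr, hrC, Polynomial.cyclotomic_prime, mul_comm, ← Polynomial.smul_eq_C_mul] at this
    rw [← this, Polynomial.coeff_smul]
    rw [Polynomial.finset_sum_coeff]
    have h5 : ∀ b ∈ Finset.range 5, (X ^ b : ℚ[X]).coeff (k:ℕ) = if b = (k:ℕ) then 1 else 0 :=
      fun b _ => by rw [Polynomial.coeff_X_pow]; exact if_congr eq_comm rfl rfl
    rw [Finset.sum_congr rfl h5, Finset.sum_ite_eq' (Finset.range 5) (k:ℕ) (fun _ => (1:ℚ)),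
      if_pos (Finset.mem_range.mpr k.isLt)]
    simp
  have hsum : (5 : ℚ) * r.coeff 0 = 0 := by
    have : ∑ k : Fin 5, (d k : ℚ) = 0 := by
      rw [← Int.cast_sum, h2, Int.cast_zero]
    rw [Finset.sum_congr rfl (fun k _ => hall k)] at this
    simpa [Finset.sum_const] using this
  have hc0 : r.coeff 0 = 0 := by
    have : (5:ℚ) ≠ 0 := by norm_num
    exact (mul_eq_zero.mp hsum).resolve_left this
  funext k
  have := hall k
  rw [hc0] at this
  exact_mod_cast this

lemma R_pos : 0 < R := by
  apply Real.sqrt_pos.mpr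
  have := Real.sqrt_nonneg 5
  linarith

noncomputable def ept (k : Fin 5) : EuclideanSpace ℝ (Fin 2) :=
  WithLp.toLp 2 ![R * Real.sin (2 * Real.pi * (k : ℕ) / 5), R * Real.cos (2 * Real.pi * (k : ℕ) / 5)]

lemma zeta_pow_re (k : Fin 5) : (zeta ^ (k : ℕ)).re = Real.cos (2 * Real.pi * (k:ℕ) / 5) := by
  have : zeta ^ (k : ℕ) = Complex.exp (((2 * Real.pi * (k:ℕ) / 5 : ℝ) : ℂ) * I) := by
    rw [zeta, ← Complex.exp_nat_mul]
    congr 1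
    push_cast
    ring
  rw [this, Complex.exp_ofReal_mul_I_re]

lemma zeta_pow_im (k : Fin 5) : (zeta ^ (k : ℕ)).im = Real.sin (2 * Real.pi * (k:ℕ) / 5) := by
  have : zeta ^ (k : ℕ) = Complex.exp (((2 * Real.pi * (k:ℕ) / 5 : ℝ) : ℂ) * I) := by
    rw [zeta, ← Complex.exp_nat_mul]
    congr 1
    push_cast
    ring
  rw [this, Complex.exp_ofReal_mul_I_im]

lemma inj_counts (m m' : Fin 5 → ℕ) (hm : ∑ k, m k = 5) (hm' : ∑ k, m' k = 5)
    (h : ∑ k : Fin 5, m k • ept k = ∑ k : Fin 5, m' k • ept k) : m = m' := by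
  have h0 : ∑ k : Fin 5, m k • (R * Real.sin (2 * Real.pi * (k:ℕ) / 5))
      = ∑ k : Fin 5, m' k • (R * Real.sin (2 * Real.pi * (k:ℕ) / 5)) :=
    by
      have := congrArg (fun v : EuclideanSpace ℝ (Fin 2) => v 0) h
      simpa [ept] using this
  have h1 : ∑ k : Fin 5, m k • (R * Real.cos (2 * Real.pi * (k:ℕ) / 5))
      = ∑ k : Fin 5, m' k • (R * Real.cos (2 * Real.pi * (k:ℕ) / 5)) :=
    by
      have := congrArg (fun v : EuclideanSpace ℝ (Fin 2) => v 1) h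
      simpa [ept] using this
  simp only [nsmul_eq_mul] at h0 h1
  have hR := R_pos.ne'
  have hsin : ∑ k : Fin 5, (m k : ℝ) * Real.sin (2 * Real.pi * (k:ℕ) / 5)
      = ∑ k : Fin 5, (m' k : ℝ) * Real.sin (2 * Real.pi * (k:ℕ) / 5) := by
    apply mul_left_cancel₀ hR
    rw [Finset.mul_sum, Finset.mul_sum]
    calc ∑ k : Fin 5, R * ((m k : ℝ) * Real.sin (2 * Real.pi * (k:ℕ) / 5))
        = ∑ k : Fin 5, (m k : ℝ) * (R * Real.sin (2 * Real.pi * (k:ℕ) / 5)) := by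
          apply Finset.sum_congr rfl; intros; ring
      _ = ∑ k : Fin 5, (m' k : ℝ) * (R * Real.sin (2 * Real.pi * (k:ℕ) / 5)) := h0
      _ = ∑ k : Fin 5, R * ((m' k : ℝ) * Real.sin (2 * Real.pi * (k:ℕ) / 5)) := by
          apply Finset.sum_congr rfl; intros; ring
  have hcos : ∑ k : Fin 5, (m k : ℝ) * Real.cos (2 * Real.pi * (k:ℕ) / 5)
      = ∑ k : Fin 5, (m' k : ℝ) * Real.cos (2 * Real.pi * (k:ℕ) / 5) := by
    apply mul_left_cancel₀ hR
    rw [Finset.mul_sum, Finset.mul_sum]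
    calc ∑ k : Fin 5, R * ((m k : ℝ) * Real.cos (2 * Real.pi * (k:ℕ) / 5))
        = ∑ k : Fin 5, (m k : ℝ) * (R * Real.cos (2 * Real.pi * (k:ℕ) / 5)) := by
          apply Finset.sum_congr rfl; intros; ring
      _ = ∑ k : Fin 5, (m' k : ℝ) * (R * Real.cos (2 * Real.pi * (k:ℕ) / 5)) := h1
      _ = ∑ k : Fin 5, R * ((m' k : ℝ) * Real.cos (2 * Real.pi * (k:ℕ) / 5)) := by
          apply Finset.sum_congr rfl; intros; ring
  set d : Fin 5 → ℤ := fun k => (m k : ℤ) - (m' k : ℤ) with hd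
  have hz : ∑ k : Fin 5, (d k : ℂ) * zeta ^ (k : ℕ) = 0 := by
    apply Complex.ext
    · rw [Complex.re_sum, Complex.zero_re]
      have : ∀ k : Fin 5, ((d k : ℂ) * zeta ^ (k:ℕ)).re
          = (d k : ℝ) * Real.cos (2 * Real.pi * (k:ℕ) / 5) := by
        intro k
        rw [Complex.mul_re]
        simp [zeta_pow_re]
      rw [Finset.sum_congr rfl (fun k _ => this k)]
      have : ∀ k : Fin 5, (d k : ℝ) * Real.cos (2 * Real.pi * (k:ℕ) / 5)
          = (m k : ℝ) * Real.cos (2 * Real.pi * (k:ℕ) / 5)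
            - (m' k : ℝ) * Real.cos (2 * Real.pi * (k:ℕ) / 5) := by
        intro k; rw [hd]; push_cast; ring
      rw [Finset.sum_congr rfl (fun k _ => this k), Finset.sum_sub_distrib, hcos, sub_self]
    · rw [Complex.im_sum, Complex.zero_im]
      have : ∀ k : Fin 5, ((d k : ℂ) * zeta ^ (k:ℕ)).im
          = (d k : ℝ) * Real.sin (2 * Real.pi * (k:ℕ) / 5) := by
        intro k
        rw [Complex.mul_im]
        simp [zeta_pow_im]
      rw [Finset.sum_congr rfl (fun k _ => this k)]
      have : ∀ k : Fin 5, (d k : ℝ) * Real.sin (2 * Real.pi * (k:ℕ) / 5)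
          = (m k : ℝ) * Real.sin (2 * Real.pi * (k:ℕ) / 5)
            - (m' k : ℝ) * Real.sin (2 * Real.pi * (k:ℕ) / 5) := by
        intro k; rw [hd]; push_cast; ring
      rw [Finset.sum_congr rfl (fun k _ => this k), Finset.sum_sub_distrib, hsin, sub_self]
  have hs : ∑ k : Fin 5, d k = 0 := by
    rw [hd]
    push_cast
    rw [Finset.sum_sub_distrib]
    rw [show (∑ k : Fin 5, (m k : ℤ)) = 5 by exact_mod_cast congrArg (Nat.cast : ℕ → ℤ) hm,
        show (∑ k : Fin 5, (m' k : ℤ)) = 5 by exact_mod_cast congrArg (Nat.cast : ℕ → ℤ) hm']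
    ring
  have := key d hz hs
  funext k
  have hk := congrFun this k
  simp only [hd, Pi.zero_apply, sub_eq_zero] at hk
  exact_mod_cast hk

lemma mem_G5_iff (p : EuclideanSpace ℝ (Fin 2)) : p ∈ G5 ↔ ∃ k : Fin 5, p = ept k := by
  constructor
  · rintro ⟨k, hk, h⟩
    exact ⟨⟨k, hk⟩, (WithLp.toLp_ofLp 2 p).symm.trans (congrArg (WithLp.toLp 2) h)⟩
  · rintro ⟨k, rfl⟩
    exact ⟨k, k.isLt, rfl⟩

noncomputable def F (s : Multiset (Fin 5)) : EuclideanSpace ℝ (Fin 2) := (s.map ept).sum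

lemma sum_set_eq : G5 + G5 + G5 + G5 + G5 = F '' {s : Multiset (Fin 5) | Multiset.card s = 5} := by
  ext p
  constructor
  · rintro ⟨q, hq, e5, he5, rfl⟩
    obtain ⟨q2, hq2, e4, he4, rfl⟩ := hq
    obtain ⟨q3, hq3, e3, he3, rfl⟩ := hq2
    obtain ⟨e1, he1, e2, he2, rfl⟩ := hq3
    obtain ⟨k1, rfl⟩ := (mem_G5_iff _).mp he1
    obtain ⟨k2, rfl⟩ := (mem_G5_iff _).mp he2
    obtain ⟨k3, rfl⟩ := (mem_G5_iff _).mp he3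
    obtain ⟨k4, rfl⟩ := (mem_G5_iff _).mp he4
    obtain ⟨k5, rfl⟩ := (mem_G5_iff _).mp he5
    refine ⟨{k1, k2, k3, k4, k5}, by simp, ?_⟩
    simp only [F, Multiset.insert_eq_cons, Multiset.map_cons, Multiset.map_singleton,
      Multiset.sum_cons, Multiset.sum_singleton]
    abel
  · rintro ⟨s, hs, rfl⟩
    obtain ⟨l, rfl⟩ := Quot.exists_rep s
    have hl : l.length = 5 := hs
    obtain ⟨k1, k2, k3, k4, k5, rfl⟩ : ∃ a b c d e, l = [a, b, c, d, e] := by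
      rcases l with _ | ⟨a, _ | ⟨b, _ | ⟨c, _ | ⟨d, _ | ⟨e, _ | ⟨f, l⟩⟩⟩⟩⟩⟩ <;>
        simp_all
    have : F (Quot.mk _ [k1, k2, k3, k4, k5]) = ept k1 + ept k2 + ept k3 + ept k4 + ept k5 := by
      show ((([k1,k2,k3,k4,k5] : List (Fin 5)) : Multiset (Fin 5)).map ept).sum = _
      simp
      abel
    rw [this]
    exact Set.add_mem_add (Set.add_mem_add (Set.add_mem_add (Set.add_mem_add
      ((mem_G5_iff _).mpr ⟨k1, rfl⟩) ((mem_G5_iff _).mpr ⟨k2, rfl⟩))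
      ((mem_G5_iff _).mpr ⟨k3, rfl⟩)) ((mem_G5_iff _).mpr ⟨k4, rfl⟩))
      ((mem_G5_iff _).mpr ⟨k5, rfl⟩)

lemma F_eq_counts (s : Multiset (Fin 5)) :
    F s = ∑ k : Fin 5, s.count k • ept k := by
  rw [F, Finset.sum_multiset_map_count]
  apply Finset.sum_subset (Finset.subset_univ _)
  intro k _ hk
  rw [Multiset.count_eq_zero_of_notMem (by simpa using hk), zero_smul]

lemma card_eq_sum_counts (s : Multiset (Fin 5)) :
    Multiset.card s = ∑ k : Fin 5, s.count k := by
  have h := Finset.sum_subset (f := fun k => s.count k) (Finset.subset_univ s.toFinset)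
    (fun k _ hk => Multiset.count_eq_zero_of_notMem (by simpa using hk))
  rw [← h, Multiset.toFinset_sum_count_eq]

/-- The Minkowski sum of five copies of `G₅` has exactly 126 points. -/
theorem minkowski_sum_card : (G5 + G5 + G5 + G5 + G5).ncard = 126 := by
  rw [sum_set_eq]
  have hinj : Set.InjOn F {s : Multiset (Fin 5) | Multiset.card s = 5} := by
    intro s hs s' hs' h
    rw [F_eq_counts, F_eq_counts] at h
    have hm : ∑ k : Fin 5, s.count k = 5 := (card_eq_sum_counts s).symm.trans hs
    have hm' : ∑ k : Fin 5, s'.count k = 5 := (card_eq_sum_counts s').symm.trans hs'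
    have hc := inj_counts _ _ hm hm' h
    ext a
    exact congrFun hc a
  rw [Set.ncard_image_of_injOn hinj]
  have hcard : ({s : Multiset (Fin 5) | Multiset.card s = 5} : Set _).ncard
      = Nat.card (Sym (Fin 5) 5) := by
    rw [← Nat.card_coe_set_eq]
    exact Nat.card_congr (Equiv.subtypeEquivRight fun s => Iff.rfl)
  rw [hcard, Nat.card_eq_fintype_card, Sym.card_sym_eq_choose]
  simp
  decide
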